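/- Let φ = (1+√5)/2. For all real numbers p and r satisfying (1 + φ²)p² + r² = 1, one has the identity 10φ·(φ⁴p² − r²)·(φ⁻²p² − r²)·p² = (2/√5)·(16r⁴ − 12r² + 1)·(1 − r²). Consequently, along the singular orbit y = φx of the icosahedral superflow, the coordinate r satisfies the autonomous ODE r′ = (2/√5)(16r⁴ − 12r² + 1)(1 − r²). -/

import Mathlib

/-- The golden ratio. -/
noncomputable def φ : ℝ := (1 + Real.sqrt 5) / 2

lemma key (p r : ℝ) (h : (1 + φ ^ 2) * p ^ 2 + r ^ 2 = 1) :
    10 * φ * (φ ^ 4 * p ^ 2 - r ^ 2) * ((1 / φ ^ 2) * p ^ 2 - r ^ 2) * p ^ 2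
      = (2 / Real.sqrt 5) * (16 * r ^ 4 - 12 * r ^ 2 + 1) * (1 - r ^ 2) := by
  have hs : Real.sqrt 5 ^ 2 = 5 := Real.sq_sqrt (by norm_num)
  have hs0 : (0:ℝ) < Real.sqrt 5 := Real.sqrt_pos.mpr (by norm_num)
  set s := Real.sqrt 5 with hsdef
  have hφ : φ = (1 + s) / 2 := rfl
  rw [hφ] at h ⊢
  have hden : (5 + s) ≠ 0 := by positivity
  have hp : p ^ 2 = 2 * (1 - r ^ 2) / (5 + s) := by
    rw [eq_div_iff hden]
    field_simp at h
    linear_combination h / 2 - p ^ 2 / 2 * hs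
  rw [hp]
  have h1s : (1 + s) ≠ 0 := by positivity
  field_simp
  ring_nf
  linear_combination ((400:ℝ) - (5200:ℝ) * r ^ 2 + (11200:ℝ) * r ^ 4 - (6400:ℝ) * r ^ 6 + (624:ℝ) * s ^ 1 - (7622:ℝ) * s ^ 1 * r ^ 2 + (16172:ℝ) * s ^ 1 * r ^ 4 - (9174:ℝ) * s ^ 1 * r ^ 6 + (304:ℝ) * s ^ 2 - (4402:ℝ) * s ^ 2 * r ^ 2 + (8772:ℝ) * s ^ 2 * r ^ 4 - (4674:ℝ) * s ^ 2 * r ^ 6 + (80:ℝ) * s ^ 3 - (1740:ℝ) * s ^ 3 * r ^ 2 + (3320:ℝ) * s ^ 3 * r ^ 4 - (1660:ℝ) * s ^ 3 * r ^ 6 - (500:ℝ) * s ^ 4 * r ^ 2 + (1000:ℝ) * s ^ 4 * r ^ 4 - (500:ℝ) * s ^ 4 * r ^ 6 - (110:ℝ) * s ^ 5 * r ^ 2 + (220:ℝ) * s ^ 5 * r ^ 4 - (110:ℝ) * s ^ 5 * r ^ 6 - (10:ℝ) * s ^ 6 * r ^ 2 + (20:ℝ) * s ^ 6 * r ^ 4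 - (10:ℝ) * s ^ 6 * r ^ 6) * hs


/-- For `(1 + φ²)p² + r² = 1` one has
`10φ(φ⁴p² − r²)(φ⁻²p² − r²)p² = (2/√5)(16r⁴ − 12r² + 1)(1 − r²)`; consequently,
along the singular orbit `y = φx` of the icosahedral superflow, the coordinate `r`
satisfies the autonomous ODE `r′ = (2/√5)(16r⁴ − 12r² + 1)(1 − r²)`. -/
theorem stmt16 :
    (∀ p r : ℝ, (1 + φ ^ 2) * p ^ 2 + r ^ 2 = 1 →
      10 * φ * (φ ^ 4 * p ^ 2 - r ^ 2) * ((1 / φ ^ 2) * p ^ 2 - r ^ 2) * p ^ 2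
        = (2 / Real.sqrt 5) * (16 * r ^ 4 - 12 * r ^ 2 + 1) * (1 - r ^ 2)) ∧
    (∀ (I : Set ℝ) (p r : ℝ → ℝ),
      (∀ t ∈ I, (1 + φ ^ 2) * (p t) ^ 2 + (r t) ^ 2 = 1) →
      (∀ t ∈ I, HasDerivAt r
        (10 * φ * (φ ^ 4 * (p t) ^ 2 - (r t) ^ 2) * ((1 / φ ^ 2) * (p t) ^ 2 - (r t) ^ 2)
          * (p t) ^ 2) t) →
      ∀ t ∈ I, HasDerivAt r
        ((2 / Real.sqrt 5) * (16 * (r t) ^ 4 - 12 * (r t) ^ 2 + 1) * (1 - (r t) ^ 2)) t) := by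
  refine ⟨fun p r h => key p r h, fun I p r h1 h2 t ht => ?_⟩
  have := h2 t ht
  rwa [key (p t) (r t) (h1 t ht)] at this
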